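/- Let f : ℝ → ℝ be defined by f(x) = ∫_0^x (1 - t^4)^(-3/4) dt, and suppose g : ℝ → ℝ is continuous at 0 with g(0) = 0 and f(g(x)) = x for all x in some neighborhood of 0 (so g = sin_4 near 0). Then (g(x) - x)/x^5 tends to -18/5! = -3/20 as x tends to 0 through nonzero values. -/

import Mathlib

open Real intervalIntegral Filter Topology

private lemma sin4_aux_cont : ∀ y ∈ Set.Ioo (-1:ℝ) 1,
    ContinuousAt (fun t : ℝ => (1 - t ^ 4) ^ (-(3 / 4 : ℝ))) y := by
  intro y hy
  have hy2 : y ^ 2 < 1 := by nlinarith [hy.1, hy.2]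
  have h1 : (1:ℝ) - y ^ 4 ≠ 0 := by nlinarith [sq_nonneg y]
  have hc : ContinuousAt (fun t : ℝ => 1 - t ^ 4) y :=
    (continuous_const.sub (continuous_pow 4)).continuousAt
  exact hc.rpow_const (Or.inl h1)

private lemma sin4_key :
    Tendsto (fun y : ℝ =>
      ((∫ t in (0:ℝ)..y, (1 - t ^ 4) ^ (-(3 / 4 : ℝ))) - y) / y ^ 5)
      (𝓝[≠] (0:ℝ)) (𝓝 (3 / 20 : ℝ)) := by
  set h : ℝ → ℝ := fun t => (1 - t ^ 4) ^ (-(3 / 4 : ℝ)) with hh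
  have hopen : IsOpen (Set.Ioo (-1:ℝ) 1) := isOpen_Ioo
  have h0mem : (0:ℝ) ∈ Set.Ioo (-1:ℝ) 1 := by norm_num
  have hderiv : ∀ᶠ y in 𝓝 (0:ℝ),
      HasDerivAt (fun u : ℝ => (∫ t in (0:ℝ)..u, h t) - u) (h y - 1) y := by
    filter_upwards [hopen.mem_nhds h0mem] with y hy
    have hsub : Set.uIcc (0:ℝ) y ⊆ Set.Ioo (-1:ℝ) 1 :=
      Set.ordConnected_Ioo.uIcc_subset h0mem hy
    have hint : IntervalIntegrable h MeasureTheory.volume 0 y := by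
      apply ContinuousOn.intervalIntegrable
      intro t ht
      exact (sin4_aux_cont t (hsub ht)).continuousWithinAt
    have := intervalIntegral.integral_hasDerivAt_right hint
      (ContinuousAt.stronglyMeasurableAtFilter hopen sin4_aux_cont y hy)
      (sin4_aux_cont y hy)
    exact this.sub (hasDerivAt_id' y)
  have hG : ∀ᶠ y in 𝓝 (0:ℝ), HasDerivAt (fun u : ℝ => u ^ 5) (5 * y ^ 4) y := by
    filter_upwards with y
    simpa using hasDerivAt_pow 5 y
  -- the limit of the derivative quotient
  have hs : HasDerivAt (fun x : ℝ => x ^ (-(3/4:ℝ))) (-(3/4)) 1 := by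
    have := Real.hasDerivAt_rpow_const (x := (1:ℝ)) (p := -(3/4)) (Or.inl one_ne_zero)
    simpa using this
  have hslope := hasDerivAt_iff_tendsto_slope.mp hs
  have hmap : Tendsto (fun y : ℝ => 1 - y ^ 4) (𝓝[≠] (0:ℝ)) (𝓝[≠] (1:ℝ)) := by
    rw [tendsto_nhdsWithin_iff]
    constructor
    · have hcont14 : Continuous (fun y : ℝ => 1 - y ^ 4) :=
        continuous_const.sub (continuous_pow 4)
      have h14 := hcont14.tendsto (0:ℝ)
      norm_num at h14
      exact h14.mono_left nhdsWithin_le_nhds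
    · filter_upwards [eventually_mem_nhdsWithin] with y hy
      have : y ^ 4 ≠ 0 := pow_ne_zero _ hy
      simp only [Set.mem_compl_iff, Set.mem_singleton_iff]
      intro hc
      exact this (by linarith)
  have hcomp := hslope.comp hmap
  have hdiv : Tendsto (fun y : ℝ => (h y - 1) / (5 * y ^ 4)) (𝓝[≠] (0:ℝ)) (𝓝 (3/20)) := by
    have hm := hcomp.const_mul (-(1/5) : ℝ)
    have heval : (-(1/5) : ℝ) * (-(3/4)) = 3/20 := by norm_num
    rw [heval] at hm
    apply hm.congr'
    filter_upwards [eventually_mem_nhdsWithin] with y hy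
    have hy4 : y ^ 4 ≠ 0 := pow_ne_zero _ (hy : y ≠ (0:ℝ))
    simp only [Function.comp, slope_def_field, hh]
    rw [Real.one_rpow]
    field_simp
    ring
  have hfa : Tendsto (fun u : ℝ => (∫ t in (0:ℝ)..u, h t) - u) (𝓝[≠] (0:ℝ)) (𝓝 0) := by
    have hd0 := hderiv.self_of_nhds
    have hc := hd0.continuousAt.tendsto
    have : (∫ t in (0:ℝ)..(0:ℝ), h t) - 0 = 0 := by simp
    rw [this] at hc
    exact hc.mono_left nhdsWithin_le_nhds
  have hga : Tendsto (fun u : ℝ => u ^ 5) (𝓝[≠] (0:ℝ)) (𝓝 0) := by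
    have := (continuous_pow 5).tendsto (0:ℝ)
    exact (by simpa using this : Tendsto (fun u : ℝ => u ^ 5) (𝓝 0) (𝓝 0)).mono_left
      nhdsWithin_le_nhds
  exact HasDerivAt.lhopital_zero_nhdsNE
    (hderiv.filter_mono nhdsWithin_le_nhds)
    (hG.filter_mono nhdsWithin_le_nhds)
    (by filter_upwards [eventually_mem_nhdsWithin] with y hy
        exact mul_ne_zero (by norm_num) (pow_ne_zero _ hy))
    hfa hga hdiv

/-- `lim_{x → 0} (sin_4 x - x) / x^5 = -18/5! = -3/20`, where `sin_4` is the
local inverse at `0` of `arcsin_4(x) = ∫_0^x (1-t^4)^(-3/4) dt`. -/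
theorem sin4_sub_id_div_pow5 (f g : ℝ → ℝ)
    (hf : f = fun x : ℝ => ∫ t in (0 : ℝ)..x, (1 - t ^ 4) ^ (-(3 / 4 : ℝ)))
    (hg : ContinuousAt g 0) (hg0 : g 0 = 0)
    (hfg : ∀ᶠ x in 𝓝 (0 : ℝ), f (g x) = x) :
    Tendsto (fun x : ℝ => (g x - x) / x ^ 5) (𝓝[≠] 0) (𝓝 (-(3 / 20 : ℝ))) := by
  have hf0 : f 0 = 0 := by rw [hf]; simp
  have hgne : ∀ᶠ x in 𝓝[≠] (0:ℝ), g x ≠ 0 := by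
    filter_upwards [hfg.filter_mono nhdsWithin_le_nhds, eventually_mem_nhdsWithin]
      with x hx hx0
    intro hc
    rw [hc, hf0] at hx
    exact (hx0 : x ≠ 0) hx.symm
  have hg1 : Tendsto g (𝓝[≠] (0:ℝ)) (𝓝[≠] (0:ℝ)) := by
    rw [tendsto_nhdsWithin_iff]
    refine ⟨?_, hgne⟩
    have := hg.tendsto
    rw [hg0] at this
    exact this.mono_left nhdsWithin_le_nhds
  have h2 := sin4_key.comp hg1
  have h3 : Tendsto (fun x : ℝ => (x - g x) / (g x) ^ 5) (𝓝[≠] (0:ℝ)) (𝓝 (3/20)) := by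
    apply h2.congr'
    filter_upwards [hfg.filter_mono nhdsWithin_le_nhds] with x hx
    simp only [Function.comp]
    rw [hf] at hx
    have hx' : (∫ t in (0:ℝ)..g x, (1 - t ^ 4) ^ (-(3 / 4 : ℝ))) = x := hx
    rw [hx']
  have h4 : Tendsto (fun x : ℝ => (g x) ^ 4) (𝓝[≠] (0:ℝ)) (𝓝 0) := by
    have hgz : Tendsto g (𝓝[≠] (0:ℝ)) (𝓝 0) := hg1.mono_right nhdsWithin_le_nhds
    simpa using hgz.pow 4
  have h5 := h4.mul h3
  rw [zero_mul] at h5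
  have h6 : Tendsto (fun x : ℝ => x / g x) (𝓝[≠] (0:ℝ)) (𝓝 1) := by
    have hadd := tendsto_const_nhds.add h5 (f := fun _ : ℝ => (1:ℝ))
    rw [add_zero] at hadd
    apply hadd.congr'
    filter_upwards [hgne] with x hx
    field_simp
    ring
  have hgx : Tendsto (fun x : ℝ => g x / x) (𝓝[≠] (0:ℝ)) (𝓝 1) := by
    have := h6.inv₀ one_ne_zero
    rw [inv_one] at this
    apply this.congr
    intro x
    rw [inv_div]
  have hfinal := (h3.neg).mul (hgx.pow 5)
  have heval : -(3/20 : ℝ) * 1 ^ 5 = -(3/20) := by norm_num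
  rw [heval] at hfinal
  apply hfinal.congr'
  filter_upwards [hgne, eventually_mem_nhdsWithin] with x hx hx0
  have hx5 : (g x) ^ 5 ≠ 0 := pow_ne_zero _ hx
  have hxx : (x : ℝ) ≠ 0 := hx0
  field_simp
  ring
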